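/- Let F(t) = 1/(1+e^{-t}) denote the logistic function. Let a, b : ℝ^d → ℝ be affine functions with the same linear part, i.e., a(w) = ⟨c, w⟩ + α and b(w) = ⟨c, w⟩ + β for some c ∈ ℝ^d and α > β in ℝ. Then the function w ↦ log( F(a(w)) − F(b(w)) ) is concave on ℝ^d. -/

import Mathlib

open Real

lemma softplus_hasDerivAt (x : ℝ) :
    HasDerivAt (fun x => Real.log (1 + Real.exp x)) (Real.exp x / (1 + Real.exp x)) x := by
  have h : (0:ℝ) < 1 + Real.exp x := by positivity
  simpa using ((Real.hasDerivAt_exp x).const_add 1).log h.ne'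

lemma softplus_deriv : deriv (fun x => Real.log (1 + Real.exp x))
    = fun x => Real.exp x / (1 + Real.exp x) := by
  funext x; exact (softplus_hasDerivAt x).deriv

lemma softplus_convex : ConvexOn ℝ Set.univ (fun x => Real.log (1 + Real.exp x)) := by
  have hd : ∀ x : ℝ, HasDerivAt (fun x => Real.exp x / (1 + Real.exp x))
      (Real.exp x / (1 + Real.exp x) ^ 2) x := by
    intro x
    have h : (0:ℝ) < 1 + Real.exp x := by positivity
    have := (Real.hasDerivAt_exp x).div ((Real.hasDerivAt_exp x).const_add 1) h.ne'
    convert this using 1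
    any_goals rfl
    field_simp
    ring
  apply convexOn_univ_of_deriv2_nonneg
  · exact fun x => (softplus_hasDerivAt x).differentiableAt
  · rw [softplus_deriv]; exact fun x => (hd x).differentiableAt
  · intro x
    rw [Function.iterate_succ, Function.iterate_one, Function.comp_apply, softplus_deriv,
      (hd x).deriv]
    positivity

lemma softplus_shift_convex (γ : ℝ) :
    ConvexOn ℝ Set.univ (fun x : ℝ => Real.log (1 + Real.exp (-x - γ))) := by
  have g : ℝ →ᵃ[ℝ] ℝ := AffineMap.lineMap (-γ : ℝ) (-γ - 1 : ℝ)
  have h := softplus_convex.comp_affineMap (AffineMap.lineMap (-γ : ℝ) (-γ - 1 : ℝ))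
  simp only [Set.preimage_univ, Function.comp_def, AffineMap.lineMap_apply_module] at h
  convert h using 2 with x
  any_goals rfl
  simp only [smul_eq_mul]
  ring_nf

lemma aux_concave (α β : ℝ) :
    ConcaveOn ℝ Set.univ (fun x : ℝ =>
      Real.log (Real.exp (-β) - Real.exp (-α)) - x
        - Real.log (1 + Real.exp (-x - α)) - Real.log (1 + Real.exp (-x - β))) := by
  have h1 : ConcaveOn ℝ (Set.univ : Set ℝ)
      (fun x : ℝ => Real.log (Real.exp (-β) - Real.exp (-α)) - x) := by
    have : ConcaveOn ℝ (Set.univ : Set ℝ) (fun x : ℝ => -x) :=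
      (LinearMap.id (R := ℝ) (M := ℝ)).convexOn convex_univ |>.neg
    have h := this.add_const (Real.log (Real.exp (-β) - Real.exp (-α)))
    convert h using 1
    any_goals rfl
    funext x
    simp only [Pi.add_apply]
    ring
  have h2 := (softplus_shift_convex α).neg
  have h3 := (softplus_shift_convex β).neg
  have h := (h1.add h2).add h3
  convert h using 1
  any_goals rfl


/-- log-concavity of F ∘ a − F ∘ b for affine a, b with the same
linear part. -/
theorem log_diff_logistic_affine_concave
    (d : ℕ) (c : EuclideanSpace ℝ (Fin d)) (α β : ℝ) (hαβ : β < α)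
    (F : ℝ → ℝ) (hF : ∀ t, F t = 1 / (1 + Real.exp (-t)))
    (a b : EuclideanSpace ℝ (Fin d) → ℝ)
    (ha : ∀ w, a w = (inner ℝ c w : ℝ) + α)
    (hb : ∀ w, b w = (inner ℝ c w : ℝ) + β) :
    ConcaveOn ℝ Set.univ (fun w => Real.log (F (a w) - F (b w))) := by
  have hpos : 0 < Real.exp (-β) - Real.exp (-α) :=
    sub_pos.mpr (Real.exp_lt_exp.mpr (by linarith))
  have key : ∀ w : EuclideanSpace ℝ (Fin d),
      Real.log (F (a w) - F (b w))
        = Real.log (Real.exp (-β) - Real.exp (-α)) - (inner ℝ c w : ℝ)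
          - Real.log (1 + Real.exp (-(inner ℝ c w : ℝ) - α))
          - Real.log (1 + Real.exp (-(inner ℝ c w : ℝ) - β)) := by
    intro w
    rw [hF, hF, ha, hb]
    set x := (inner ℝ c w : ℝ) with hx
    have e1 : Real.exp (-(x + α)) = Real.exp (-x) * Real.exp (-α) := by
      rw [← Real.exp_add]; ring_nf
    have e2 : Real.exp (-(x + β)) = Real.exp (-x) * Real.exp (-β) := by
      rw [← Real.exp_add]; ring_nf
    have hA : (0:ℝ) < 1 + Real.exp (-(x + α)) := by positivity
    have hB : (0:ℝ) < 1 + Real.exp (-(x + β)) := by positivity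
    have hnum : (0:ℝ) < Real.exp (-x) * (Real.exp (-β) - Real.exp (-α)) := by positivity
    have keyfrac : 1 / (1 + Real.exp (-(x + α))) - 1 / (1 + Real.exp (-(x + β)))
        = (Real.exp (-x) * (Real.exp (-β) - Real.exp (-α)))
          / ((1 + Real.exp (-(x + α))) * (1 + Real.exp (-(x + β)))) := by
      rw [e1, e2]
      have h1 : (0:ℝ) < 1 + Real.exp (-x) * Real.exp (-α) := by positivity
      have h2 : (0:ℝ) < 1 + Real.exp (-x) * Real.exp (-β) := by positivity
      field_simp
      ring
    rw [keyfrac, Real.log_div hnum.ne' (by positivity),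
      Real.log_mul (Real.exp_ne_zero _) hpos.ne', Real.log_mul hA.ne' hB.ne', Real.log_exp]
    have r1 : -(x + α) = -x - α := by ring
    have r2 : -(x + β) = -x - β := by ring
    rw [r1, r2]
    ring
  have hconc := (aux_concave α β).comp_affineMap
    ((innerSL ℝ c).toLinearMap.toAffineMap)
  simp only [Set.preimage_univ] at hconc
  convert hconc using 1
  any_goals rfl
  funext w
  rw [key w]
  simp [Function.comp]
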